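/- If two arguments a and b in an argumentation framework AF have the same set of attackers, then their conditionals in θ(AF) have the same antecedent, and swapping a and b induces a symmetry showing Ccs(a) = Ccs(b) whenever additionally a and b attack the same arguments and do not attack each other or themselves; hence a ≃ b under Ccbs. -/

import Mathlib

/-- A possible world: a truth assignment over the atoms/arguments. -/
abbrev World (A : Type) := A → Bool

/-- A conditional (φ|ψ): first component is the antecedent ψ, second the consequent φ,
both given semantically as Boolean functions on worlds. -/
abbrev Cond (A : Type) := (World A → Bool) × (World A → Bool)

/-- `w` falsifies (φ|ψ) iff w ⊨ ψ ∧ ¬φ. -/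
def falsifies {A : Type} (w : World A) (c : Cond A) : Prop :=
  c.1 w = true ∧ c.2 w = false

/-- `w` verifies (φ|ψ) iff w ⊨ ψ ∧ φ. -/
def verifies {A : Type} (w : World A) (c : Cond A) : Prop :=
  c.1 w = true ∧ c.2 w = true

instance {A : Type} (w : World A) (c : Cond A) : Decidable (falsifies w c) := by
  unfold falsifies; infer_instance

instance {A : Type} (w : World A) (c : Cond A) : Decidable (verifies w c) := by
  unfold verifies; infer_instance

/-- Δ tolerates δ iff some world verifies δ and falsifies no member of Δ. -/
def tolerates {A : Type} [Fintype A] [DecidableEq A]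
    (Δ : Finset (Cond A)) (c : Cond A) : Prop :=
  ∃ w : World A, verifies w c ∧ ∀ d ∈ Δ, ¬ falsifies w d

instance {A : Type} [Fintype A] [DecidableEq A] (Δ : Finset (Cond A)) (c : Cond A) :
    Decidable (tolerates Δ c) := by
  unfold tolerates
  have : DecidablePred (fun w : World A => verifies w c ∧ ∀ d ∈ Δ, ¬ falsifies w d) :=
    fun _ => inferInstance
  infer_instance

/-- The Z-level of a conditional: Z(δ) = i iff δ ∈ Δ_i in the Z-partition,
where Δ_0 is the set of conditionals tolerated by Δ and the recursion continues on Δ \ Δ_0. -/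
def zlevel {A : Type} [Fintype A] [DecidableEq A]
    (Δ : Finset (Cond A)) (c : Cond A) : ℕ :=
  if tolerates Δ c then 0
  else
    if h : (Δ.filter (fun d => ¬ tolerates Δ d)).card < Δ.card then
      1 + zlevel (Δ.filter (fun d => ¬ tolerates Δ d)) c
    else 0
termination_by Δ.card
decreasing_by exact h

/-- The System Z ranking function: κ^Z(w) = max{Z(δ) : δ ∈ Δ falsified by w} + 1,
with max ∅ = -1 (so κ^Z(w) = 0 iff w falsifies no conditional of Δ). -/
def kappaZ {A : Type} [Fintype A] [DecidableEq A]
    (Δ : Finset (Cond A)) (w : World A) : ℕ :=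
  (Δ.filter (fun d => falsifies w d)).sup (fun d => zlevel Δ d + 1)

/-- The translation θ of an argumentation framework with attack relation `att`
into conditionals: for each argument a, the conditional (a | ⋀_{(b,a)∈R} ¬b). -/
def theta {A : Type} [Fintype A] [DecidableEq A] (att : A → A → Bool) : Finset (Cond A) :=
  Finset.univ.image (fun a : A =>
    ((fun w : World A => decide (∀ b, att b a = true → w b = false)),
     (fun w : World A => w a)))

/-- Ccs(a): the number of System-Z-rank-0 worlds satisfying a. -/
def Ccs {A : Type} [Fintype A] [DecidableEq A]
    (Δ : Finset (Cond A)) (a : A) : ℕ :=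
  (Finset.univ.filter (fun w : World A => kappaZ Δ w = 0 ∧ w a = true)).card

section Aux

variable {A : Type} [Fintype A] [DecidableEq A]

/-- Action of a permutation on conditionals by precomposition on worlds. -/
def condSwap (σ : A ≃ A) (c : Cond A) : Cond A :=
  (fun w => c.1 (fun x => w (σ x)), fun w => c.2 (fun x => w (σ x)))

lemma comp_invol {σ : A ≃ A} (hσ : ∀ x, σ (σ x) = x) (w : World A) :
    (fun x => w (σ (σ x))) = w := funext fun x => by rw [hσ]

lemma condSwap_invol {σ : A ≃ A} (hσ : ∀ x, σ (σ x) = x) (c : Cond A) :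
    condSwap σ (condSwap σ c) = c := by
  unfold condSwap
  refine Prod.ext ?_ ?_ <;> · dsimp; funext w; rw [comp_invol hσ]

lemma falsifies_condSwap (σ : A ≃ A) (w : World A) (c : Cond A) :
    falsifies w (condSwap σ c) ↔ falsifies (fun x => w (σ x)) c := Iff.rfl

lemma verifies_condSwap (σ : A ≃ A) (w : World A) (c : Cond A) :
    verifies w (condSwap σ c) ↔ verifies (fun x => w (σ x)) c := Iff.rfl

lemma tolerates_condSwap_of {σ : A ≃ A} (hσ : ∀ x, σ (σ x) = x)
    {Δ : Finset (Cond A)} (hΔ : ∀ d ∈ Δ, condSwap σ d ∈ Δ) {c : Cond A}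
    (h : tolerates Δ c) : tolerates Δ (condSwap σ c) := by
  obtain ⟨w, hv, hf⟩ := h
  refine ⟨fun x => w (σ x), ?_, ?_⟩
  · rw [verifies_condSwap]
    show verifies (fun x => w (σ (σ x))) c
    rw [comp_invol hσ]; exact hv
  · intro d hd hfd
    exact hf (condSwap σ d) (hΔ d hd) hfd

lemma tolerates_condSwap {σ : A ≃ A} (hσ : ∀ x, σ (σ x) = x)
    {Δ : Finset (Cond A)} (hΔ : ∀ d ∈ Δ, condSwap σ d ∈ Δ) (c : Cond A) :
    tolerates Δ (condSwap σ c) ↔ tolerates Δ c := by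
  constructor
  · intro h
    have := tolerates_condSwap_of hσ hΔ h
    rwa [condSwap_invol hσ] at this
  · exact tolerates_condSwap_of hσ hΔ

lemma zlevel_condSwap {σ : A ≃ A} (hσ : ∀ x, σ (σ x) = x) :
    ∀ n (Δ : Finset (Cond A)), Δ.card ≤ n → (∀ d ∈ Δ, condSwap σ d ∈ Δ) →
    ∀ c, zlevel Δ (condSwap σ c) = zlevel Δ c := by
  intro n
  induction n with
  | zero =>
    intro Δ hcard hΔ c
    have : Δ = ∅ := Finset.card_eq_zero.mp (Nat.le_zero.mp hcard)
    subst this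
    rw [zlevel]; conv_rhs => rw [zlevel]
    simp [tolerates_condSwap hσ hΔ c]
  | succ n ih =>
    intro Δ hcard hΔ c
    rw [zlevel]; conv_rhs => rw [zlevel]
    rw [if_congr (tolerates_condSwap hσ hΔ c) rfl rfl]
    by_cases ht : tolerates Δ c
    · simp [ht]
    · simp only [ht, if_false]
      set Δ' := Δ.filter (fun d => ¬ tolerates Δ d) with hΔ'
      have hΔ'inv : ∀ d ∈ Δ', condSwap σ d ∈ Δ' := by
        intro d hd
        rw [hΔ', Finset.mem_filter] at hd ⊢
        exact ⟨hΔ d hd.1, by rw [tolerates_condSwap hσ hΔ]; exact hd.2⟩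
      by_cases h : Δ'.card < Δ.card
      · rw [dif_pos h, dif_pos h,
          ih Δ' (by omega) hΔ'inv c]
      · rw [dif_neg h, dif_neg h]

lemma kappaZ_condSwap {σ : A ≃ A} (hσ : ∀ x, σ (σ x) = x)
    {Δ : Finset (Cond A)} (hΔ : ∀ d ∈ Δ, condSwap σ d ∈ Δ) (w : World A) :
    kappaZ Δ (fun x => w (σ x)) = kappaZ Δ w := by
  have hz : ∀ c, zlevel Δ (condSwap σ c) = zlevel Δ c :=
    zlevel_condSwap hσ Δ.card Δ le_rfl hΔ
  have key : ∀ (v : World A), kappaZ Δ (fun x => v (σ x)) ≤ kappaZ Δ v := by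
    intro v
    apply Finset.sup_le
    intro d hd
    rw [Finset.mem_filter] at hd
    have h1 : falsifies v (condSwap σ d) := hd.2
    have h2 : condSwap σ d ∈ Δ.filter (fun e => falsifies v e) :=
      Finset.mem_filter.mpr ⟨hΔ d hd.1, h1⟩
    calc zlevel Δ d + 1 = zlevel Δ (condSwap σ d) + 1 := by rw [hz]
    _ ≤ _ := Finset.le_sup (f := fun e => zlevel Δ e + 1) h2
  refine le_antisymm (key w) ?_
  have := key (fun x => w (σ x))
  rwa [comp_invol hσ] at this

end Aux

/-- if a and b have the same attackers (so their conditionals share the same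
antecedent) and the transposition of a and b is an automorphism of AF, with a and b not
attacking each other or themselves, then Ccs(a) = Ccs(b), i.e. a ≃ b under Ccbs. -/
theorem swap_symmetric_arguments_equal {A : Type} [Fintype A] [DecidableEq A]
    (att : A → A → Bool) (a b : A)
    (hin : ∀ x : A, att x a = att x b)
    (hswap : ∀ x y : A, att x y = att (Equiv.swap a b x) (Equiv.swap a b y))
    (hab : att a b = false) (hba : att b a = false)
    (haa : att a a = false) (hbb : att b b = false) :
    ((fun w : World A => decide (∀ c, att c a = true → w c = false)) =
     (fun w : World A => decide (∀ c, att c b = true → w c = false))) ∧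
    Ccs (theta att) a = Ccs (theta att) b := by
  set σ : A ≃ A := Equiv.swap a b with hσdef
  have hσ : ∀ x, σ (σ x) = x := fun x => Equiv.swap_apply_self a b x
  have hcond : ∀ x : A,
      condSwap σ (((fun w : World A => decide (∀ c, att c x = true → w c = false)),
        (fun w : World A => w x)) : Cond A) =
      (((fun w : World A => decide (∀ c, att c (σ x) = true → w c = false)),
        (fun w : World A => w (σ x))) : Cond A) := by
    intro x
    unfold condSwap
    refine Prod.ext ?_ rfl
    dsimp
    funext w
    rw [decide_eq_decide]
    constructor
    · intro h c hc
      have hc' : att (σ c) x = true := by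
        rw [hswap (σ c) x]
        show att (σ (σ c)) (σ x) = true
        rw [hσ]; exact hc
      have := h (σ c) hc'
      rwa [hσ] at this
    · intro h c hc
      have hc' : att (σ c) (σ x) = true := by rw [← hswap]; exact hc
      exact h (σ c) hc'
  have hΔ : ∀ d ∈ theta att, condSwap σ d ∈ theta att := by
    intro d hd
    rw [theta, Finset.mem_image] at hd ⊢
    obtain ⟨x, _, hx⟩ := hd
    exact ⟨σ x, Finset.mem_univ _, by rw [← hcond x, hx]⟩
  constructor
  · funext w
    rw [decide_eq_decide]
    constructor
    · intro h c hc
      exact h c (by rw [hin]; exact hc)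
    · intro h c hc
      exact h c (by rw [← hin]; exact hc)
  · unfold Ccs
    apply Finset.card_nbij' (i := fun w x => w (σ x)) (j := fun w x => w (σ x))
    · intro w hw
      rw [Finset.mem_coe, Finset.mem_filter] at hw ⊢
      refine ⟨Finset.mem_univ _, kappaZ_condSwap hσ hΔ w ▸ hw.2.1, ?_⟩
      show w (σ b) = true
      rw [hσdef, Equiv.swap_apply_right]
      exact hw.2.2
    · intro w hw
      rw [Finset.mem_coe, Finset.mem_filter] at hw ⊢
      refine ⟨Finset.mem_univ _, kappaZ_condSwap hσ hΔ w ▸ hw.2.1, ?_⟩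
      show w (σ a) = true
      rw [hσdef, Equiv.swap_apply_left]
      exact hw.2.2
    · intro w _
      exact comp_invol hσ w
    · intro w _
      exact comp_invol hσ w
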